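/- Let s ∈ (0, 1], let λ₀ > 0, and let y ∈ ℝ^n satisfy ‖y‖₂ = 1 and ‖y‖_∞ ≤ λ₀. Let a₁, …, a_n be i.i.d. real random variables, each equal to 0 with probability 1−s and distributed as N(0, 1/s) with probability s, and set Y = Σ_{j=1}^n a_j·y_j. Then for every μ with 0 < μ ≤ 2√(2s)/λ₀, one has P(|Y| ≥ μ) ≤ 2e^{−μ²/4}. Consequently, if A ∈ ℝ^{m×n} is a sparse Gaussian random matrix with sparsity parameter s, then P( ‖A·y‖_∞ ≥ μ ) ≤ 2m·e^{−μ²/4}. -/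

import Mathlib

open MeasureTheory ProbabilityTheory Real
open scoped NNReal ENNReal

noncomputable section

/-- Matrix–vector product for matrices represented as functions. -/
def matVec {a b : ℕ} (M : Fin a → Fin b → ℝ) (x : Fin b → ℝ) : Fin a → ℝ :=
  fun i => ∑ j, M i j * x j

/-- Matrix–matrix product for matrices represented as functions. -/
def matMul {a b c : ℕ} (M : Fin a → Fin b → ℝ) (N : Fin b → Fin c → ℝ) :
    Fin a → Fin c → ℝ :=
  fun i k => ∑ j, M i j * N j k

/-- Powers of a square matrix represented as a function. -/
def matPow {a : ℕ} (M : Fin a → Fin a → ℝ) : ℕ → (Fin a → Fin a → ℝ)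
  | 0 => fun i j => if i = j then 1 else 0
  | k + 1 => matMul (matPow M k) M

/-- The ℓ¹ norm on ℝ^k. -/
def l1Norm {k : ℕ} (x : Fin k → ℝ) : ℝ := ∑ i, |x i|

/-- The ℓ² norm on ℝ^k. -/
def l2Norm {k : ℕ} (x : Fin k → ℝ) : ℝ := Real.sqrt (∑ i, (x i) ^ 2)

/-- The ℓ^∞ norm on ℝ^k. -/
def lInfNorm {k : ℕ} (x : Fin k → ℝ) : ℝ := ⨆ i, |x i|

/-- The (∞,1) operator norm: `max_{x ≠ 0} ‖Kx‖₁ / ‖x‖_∞`. -/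
def opNormInfOne {a b : ℕ} (K : Fin a → Fin b → ℝ) : ℝ :=
  sSup {t : ℝ | ∃ x : Fin b → ℝ, x ≠ 0 ∧ t = l1Norm (matVec K x) / lInfNorm x}

/-- The (∞,∞) operator norm: `max_{x ≠ 0} ‖Kx‖_∞ / ‖x‖_∞`. -/
def opNormInfInf {a b : ℕ} (K : Fin a → Fin b → ℝ) : ℝ :=
  sSup {t : ℝ | ∃ x : Fin b → ℝ, x ≠ 0 ∧ t = lInfNorm (matVec K x) / lInfNorm x}

/-- The law `(1-s)·δ₀ + s·N(0,1/s)` of a single entry of a sparse Gaussian random matrix. -/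
def sparseGaussianLaw (s : ℝ) : Measure ℝ :=
  (Real.toNNReal (1 - s)) • Measure.dirac (0 : ℝ) +
    (Real.toNNReal s) • gaussianReal 0 (Real.toNNReal s)⁻¹

/-- The law of a sparse Gaussian random matrix with i.i.d. entries of law
`(1-s)·δ₀ + s·N(0,1/s)`. -/
def sparseGaussianMatrixLaw (m n : ℕ) (s : ℝ) : Measure (Fin m → Fin n → ℝ) :=
  Measure.pi fun _ : Fin m => Measure.pi fun _ : Fin n => sparseGaussianLaw s

/-- The uniform law on `{-1, 1}`. -/
def signLaw : Measure ℝ :=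
  ((2 : ℝ≥0)⁻¹) • Measure.dirac (1 : ℝ) + ((2 : ℝ≥0)⁻¹) • Measure.dirac (-1 : ℝ)

/-- The law of a vector of i.i.d. uniform ±1 signs. -/
def signVecLaw (n : ℕ) : Measure (Fin n → ℝ) := Measure.pi fun _ : Fin n => signLaw

/-- Bitwise dot product of the binary representations of two natural numbers. -/
def bitDot (i j : ℕ) : ℕ :=
  ∑ k ∈ Finset.range i.size, if i.testBit k && j.testBit k then 1 else 0

/-- The normalized Walsh–Hadamard matrix `H_{ij} = n^{-1/2} (-1)^{⟨i,j⟩}` (0-indexed). -/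
def walshHadamard (n : ℕ) : Fin n → Fin n → ℝ :=
  fun i j => (Real.sqrt n)⁻¹ * (-1 : ℝ) ^ bitDot (i : ℕ) (j : ℕ)

/-- The fast Johnson–Lindenstrauss transform `Φ = A·H·D` where `D = diag d`. -/
def fjlt {m n : ℕ} (A : Fin m → Fin n → ℝ) (d : Fin n → ℝ) : Fin m → Fin n → ℝ :=
  matMul A (matMul (walshHadamard n) (fun i j => if i = j then d i else 0))

/-- The coefficient of `z^j` in `(1 + z + ⋯ + z^{lt-1})^r`. -/
def condCoeff (r lt : ℕ) (j : ℕ) : ℝ :=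
  ((∑ i ∈ Finset.range lt, (Polynomial.X : Polynomial ℝ) ^ i) ^ r).coeff j

/-- The condensation vector `v ∈ ℝ^λ` of order `r`. -/
def condVec (r lt lam : ℕ) : Fin lam → ℝ := fun j => condCoeff r lt (j : ℕ)

/-- The block matrix `I_p ⊗ v ∈ ℝ^{p × (λp)}` built from a row vector `v ∈ ℝ^λ`. -/
def kronRow {lam p : ℕ} (v : Fin lam → ℝ) (i : Fin p) (c : Fin (lam * p)) : ℝ :=
  if (c : ℕ) / lam = (i : ℕ) then
    v ⟨(c : ℕ) % lam, Nat.mod_lt _ (Nat.pos_of_ne_zero fun h => absurd c.isLt (by simp [h]))⟩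
  else 0

/-- The condensation operator `V = I_p ⊗ v`. -/
def condOp (r lt lam p : ℕ) : Fin p → Fin (lam * p) → ℝ :=
  kronRow (condVec r lt lam)

/-- The normalized condensation operator `Ṽ = (√(π/2)/(p‖v‖₂)) V`. -/
def normCondOp (r lt lam p : ℕ) : Fin p → Fin (lam * p) → ℝ :=
  fun i c => (Real.sqrt (Real.pi / 2) / ((p : ℝ) * l2Norm (condVec r lt lam))) *
    condOp r lt lam p i c

/-- The first-order difference matrix `P`. -/
def diffMat (m : ℕ) : Fin m → Fin m → ℝ :=
  fun i j => if (i : ℕ) = (j : ℕ) then 1 else if (i : ℕ) = (j : ℕ) + 1 then -1 else 0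

/-- Pairing `(i, k) ↦ i·λ + k` as an index into `Fin (λ·p)`. -/
def finPair {p lam : ℕ} (i : Fin p) (k : Fin lam) : Fin (lam * p) :=
  ⟨(i : ℕ) * lam + (k : ℕ), by
    calc (i : ℕ) * lam + (k : ℕ) < (i : ℕ) * lam + lam := Nat.add_lt_add_left k.isLt _
      _ = ((i : ℕ) + 1) * lam := by ring
      _ ≤ p * lam := Nat.mul_le_mul_right lam i.isLt
      _ = lam * p := Nat.mul_comm p lam⟩

/-- The Kronecker product `v^T ⊗ y ∈ ℝ^{λn}`, whose `(k·n + j)`-th entry is `v_k · y_j`. -/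
def kronVec {lam n : ℕ} (v : Fin lam → ℝ) (y : Fin n → ℝ) : Fin (lam * n) → ℝ :=
  fun c =>
    have hn : 0 < n := Nat.pos_of_ne_zero fun h => absurd c.isLt (by simp [h])
    v ⟨(c : ℕ) / n, (Nat.div_lt_iff_lt_mul hn).mpr c.isLt⟩ * y ⟨(c : ℕ) % n, Nat.mod_lt _ hn⟩

/-- Reshaping of an `(λp) × n` matrix into a `p × (λn)` matrix, with
`B_{i, k·n + j} = A_{i·λ + k, j}`. -/
def reshapeMat {lam p n : ℕ} (A : Fin (lam * p) → Fin n → ℝ) :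
    Fin p → Fin (lam * n) → ℝ :=
  fun i c =>
    have hn : 0 < n := Nat.pos_of_ne_zero fun h => absurd c.isLt (by simp [h])
    A (finPair i ⟨(c : ℕ) / n, (Nat.div_lt_iff_lt_mul hn).mpr c.isLt⟩)
      ⟨(c : ℕ) % n, Nat.mod_lt _ hn⟩

/-- The support `n_j = σ·j² + 1` (zero-indexed `j`, i.e. `σ(j-1)²+1` one-indexed). -/
def sigmaDeltaIdx (σ : ℕ) {r : ℕ} (j : Fin r) : ℕ := σ * (j : ℕ) ^ 2 + 1

/-- The filter coefficient `d_j = ∏_{i ≠ j} n_i / (n_i - n_j)`. -/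
def sigmaDeltaCoef (σ : ℕ) {r : ℕ} (j : Fin r) : ℝ :=
  ∏ i ∈ Finset.univ.erase j,
    (sigmaDeltaIdx σ i : ℝ) / ((sigmaDeltaIdx σ i : ℝ) - (sigmaDeltaIdx σ j : ℝ))


noncomputable section AuxSparse

open MeasureTheory ProbabilityTheory Real
open scoped NNReal ENNReal

lemma aux_gauss_pdf_mul (c : ℝ) (v : ℝ≥0) (hv : v ≠ 0) (x : ℝ) :
    gaussianPDFReal 0 v x * Real.exp (c * x)
      = Real.exp (c ^ 2 * v / 2) * gaussianPDFReal (c * v) v x := by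
  have hv' : (0 : ℝ) < v := by exact_mod_cast pos_iff_ne_zero.mpr hv
  simp only [gaussianPDFReal, sub_zero]
  rw [mul_assoc, ← Real.exp_add, mul_left_comm, ← Real.exp_add]
  congr 1
  field_simp
  ring

lemma aux_integral_exp_gaussian (c : ℝ) (v : ℝ≥0) (hv : v ≠ 0) :
    ∫ x, Real.exp (c * x) ∂(gaussianReal 0 v) = Real.exp (c ^ 2 * v / 2) := by
  rw [gaussianReal_of_var_ne_zero _ hv]
  have hmeas : Measurable fun x => (gaussianPDFReal 0 v x).toNNReal :=
    (measurable_gaussianPDFReal 0 v).real_toNNReal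
  have hpdf : gaussianPDF 0 v = fun x => ((gaussianPDFReal 0 v x).toNNReal : ℝ≥0∞) := rfl
  rw [hpdf, integral_withDensity_eq_integral_smul hmeas]
  have h2 : (fun x => (gaussianPDFReal 0 v x).toNNReal • Real.exp (c * x))
      = fun x => Real.exp (c ^ 2 * v / 2) * gaussianPDFReal (c * v) v x := by
    funext x
    rw [NNReal.smul_def, Real.coe_toNNReal _ (gaussianPDFReal_nonneg 0 v x),
      smul_eq_mul, aux_gauss_pdf_mul c v hv x]
  rw [h2, integral_const_mul, integral_gaussianPDFReal_eq_one _ hv, mul_one]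

lemma aux_integrable_exp_gaussian (c : ℝ) (v : ℝ≥0) (hv : v ≠ 0) :
    Integrable (fun x => Real.exp (c * x)) (gaussianReal 0 v) := by
  rw [gaussianReal_of_var_ne_zero _ hv]
  have hmeas : Measurable fun x => (gaussianPDFReal 0 v x).toNNReal :=
    (measurable_gaussianPDFReal 0 v).real_toNNReal
  have hpdf : gaussianPDF 0 v = fun x => ((gaussianPDFReal 0 v x).toNNReal : ℝ≥0∞) := rfl
  rw [hpdf, integrable_withDensity_iff_integrable_smul hmeas]
  have h2 : (fun x => (gaussianPDFReal 0 v x).toNNReal • Real.exp (c * x))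
      = fun x => Real.exp (c ^ 2 * v / 2) * gaussianPDFReal (c * v) v x := by
    funext x
    rw [NNReal.smul_def, Real.coe_toNNReal _ (gaussianPDFReal_nonneg 0 v x),
      smul_eq_mul, aux_gauss_pdf_mul c v hv x]
  rw [h2]
  exact (integrable_gaussianPDFReal (c * v) v).const_mul _

lemma sparse_var_ne {s : ℝ} (hs0 : 0 < s) : ((Real.toNNReal s)⁻¹ : ℝ≥0) ≠ 0 := by
  rw [ne_eq, inv_eq_zero, Real.toNNReal_eq_zero]
  linarith

lemma sparse_isProb {s : ℝ} (hs0 : 0 < s) (hs1 : s ≤ 1) :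
    IsProbabilityMeasure (sparseGaussianLaw s) := by
  constructor
  simp only [sparseGaussianLaw, Measure.add_apply, Measure.smul_apply, measure_univ,
    smul_eq_mul, mul_one]
  rw [show ((1 - s).toNNReal • (1 : ℝ≥0∞)) = ((1 - s).toNNReal : ℝ≥0∞) * 1 from rfl,
    show (s.toNNReal • (1 : ℝ≥0∞)) = (s.toNNReal : ℝ≥0∞) * 1 from rfl, mul_one, mul_one]
  rw [← ENNReal.coe_add, ← Real.toNNReal_add (by linarith) hs0.le]
  norm_num

lemma integrable_exp_dirac (c : ℝ) (a : ℝ) :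
    Integrable (fun x => Real.exp (c * x)) (Measure.dirac a) := by
  refine ⟨(Real.measurable_exp.comp (measurable_const.mul measurable_id)).aestronglyMeasurable, ?_⟩
  show (∫⁻ x, (‖Real.exp (c * x)‖₊ : ℝ≥0∞) ∂Measure.dirac a) < ⊤
  have hm : Measurable fun x : ℝ => (‖Real.exp (c * x)‖₊ : ℝ≥0∞) := by
    apply Measurable.coe_nnreal_ennreal
    exact (Real.measurable_exp.comp (measurable_const.mul measurable_id)).nnnorm
  rw [lintegral_dirac' _ hm]
  exact ENNReal.coe_lt_top

lemma sparse_integrable {s : ℝ} (hs0 : 0 < s) (c : ℝ) :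
    Integrable (fun x => Real.exp (c * x)) (sparseGaussianLaw s) := by
  unfold sparseGaussianLaw
  refine Integrable.add_measure ?_ ?_
  · exact (integrable_exp_dirac c 0).smul_measure ENNReal.coe_ne_top
  · exact (aux_integrable_exp_gaussian c _ (sparse_var_ne hs0)).smul_measure ENNReal.coe_ne_top

lemma sparse_integral {s : ℝ} (hs0 : 0 < s) (hs1 : s ≤ 1) (c : ℝ) :
    ∫ x, Real.exp (c * x) ∂(sparseGaussianLaw s)
      = (1 - s) + s * Real.exp (c ^ 2 / (2 * s)) := by
  have hcoe : (((Real.toNNReal s)⁻¹ : ℝ≥0) : ℝ) = s⁻¹ := by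
    rw [NNReal.coe_inv, Real.coe_toNNReal _ hs0.le]
  have hgauss := aux_integral_exp_gaussian c _ (sparse_var_ne hs0)
  have hint := aux_integrable_exp_gaussian c _ (sparse_var_ne hs0)
  have hint0 := integrable_exp_dirac c 0
  unfold sparseGaussianLaw
  rw [show ((Real.toNNReal (1 - s)) • Measure.dirac (0 : ℝ) : Measure ℝ)
      = ((Real.toNNReal (1 - s) : ℝ≥0∞)) • Measure.dirac (0 : ℝ) from rfl]
  rw [show ((Real.toNNReal s) • gaussianReal 0 (Real.toNNReal s)⁻¹ : Measure ℝ)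
      = ((Real.toNNReal s : ℝ≥0∞)) • gaussianReal 0 (Real.toNNReal s)⁻¹ from rfl]
  rw [integral_add_measure (hint0.smul_measure ENNReal.coe_ne_top)
    (hint.smul_measure ENNReal.coe_ne_top)]
  rw [integral_smul_measure, integral_smul_measure, integral_dirac, hgauss, hcoe]
  simp only [ENNReal.coe_toReal, smul_eq_mul, mul_zero, Real.exp_zero, mul_one]
  rw [Real.coe_toNNReal _ hs0.le, Real.coe_toNNReal _ (by linarith : (0 : ℝ) ≤ 1 - s)]
  rw [show c ^ 2 * s⁻¹ / 2 = c ^ 2 / (2 * s) by ring]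

lemma my_integrable_pi {ν : Measure ℝ} [SigmaFinite ν] :
    ∀ {n : ℕ} {f : Fin n → ℝ → ℝ}, (∀ i, Integrable (f i) ν) →
      Integrable (fun x : Fin n → ℝ => ∏ i, f i (x i)) (Measure.pi fun _ => ν)
  | 0, f, _ => by
      simp only [Finset.univ_eq_empty, Finset.prod_empty]
      rw [integrable_const_iff]
      right
      exact ⟨by rw [Measure.pi_empty_univ]; exact ENNReal.one_lt_top⟩
  | (n + 1), f, hf => by
      have hmp := (measurePreserving_piFinSuccAbove (fun _ : Fin (n + 1) => ν) 0).symm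
      rw [← hmp.integrable_comp_emb (MeasurableEquiv.measurableEmbedding _)]
      simp_rw [MeasurableEquiv.piFinSuccAbove_symm_apply, Fin.insertNthEquiv,
        Fin.prod_univ_succ, Fin.insertNth_zero]
      simp only [Fin.zero_succAbove, Function.comp_def, Fin.cons_zero, Fin.cons_succ,
        Equiv.coe_fn_mk, cast_eq]
      have h2 : Integrable (fun x : Fin n → ℝ => ∏ j, f (Fin.succ j) (x j))
          (Measure.pi fun _ => ν) := my_integrable_pi fun i => hf _
      exact Integrable.mul_prod (hf 0) h2

lemma my_integral_pi {ν : Measure ℝ} [SigmaFinite ν] :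
    ∀ {n : ℕ} (f : Fin n → ℝ → ℝ),
      (∫ x : Fin n → ℝ, ∏ i, f i (x i) ∂(Measure.pi fun _ => ν)) = ∏ i, ∫ x, f i x ∂ν
  | 0, f => by
      simp only [Finset.univ_eq_empty, Finset.prod_empty, integral_const,
        measureReal_def, Measure.pi_empty_univ, ENNReal.toReal_one, smul_eq_mul, mul_one, one_smul]
  | (n + 1), f => by
      have hmp := (measurePreserving_piFinSuccAbove (fun _ : Fin (n + 1) => ν) 0).symm
      calc
        (∫ x : Fin (n + 1) → ℝ, ∏ i, f i (x i) ∂(Measure.pi fun _ => ν))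
            = ∫ p : ℝ × (Fin n → ℝ), f 0 p.1 * ∏ i : Fin n, f (Fin.succ i) (p.2 i)
              ∂(ν.prod (Measure.pi fun _ => ν)) := by
          rw [← hmp.integral_comp']
          congr 1
          funext p
          simp_rw [MeasurableEquiv.piFinSuccAbove_symm_apply, Fin.insertNthEquiv,
            Fin.prod_univ_succ, Fin.insertNth_zero]
          simp only [Fin.zero_succAbove, Function.comp_def, Fin.cons_zero, Fin.cons_succ,
            Equiv.coe_fn_mk, cast_eq]
        _ = (∫ x, f 0 x ∂ν) * ∏ i : Fin n, ∫ x, f (Fin.succ i) x ∂ν := by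
          rw [← my_integral_pi (fun i => f (Fin.succ i)), ← integral_prod_mul]
        _ = ∏ i, ∫ x, f i x ∂ν := by rw [Fin.prod_univ_succ]

lemma my_exp_le {x : ℝ} (h0 : 0 ≤ x) (h1 : x ≤ 1) : Real.exp x ≤ 1 + 2 * x := by
  have h := Real.abs_exp_sub_one_le (x := x) (by rwa [abs_of_nonneg h0])
  rw [abs_of_nonneg h0] at h
  have := (abs_le.mp h).2
  linarith

lemma factor_le {s c : ℝ} (hs0 : 0 < s) (hc : c ^ 2 ≤ 2 * s) :
    (1 - s) + s * Real.exp (c ^ 2 / (2 * s)) ≤ Real.exp (c ^ 2) := by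
  set x := c ^ 2 / (2 * s) with hx
  have hx0 : 0 ≤ x := by positivity
  have hx1 : x ≤ 1 := by
    rw [hx, div_le_one (by linarith)]
    exact hc
  have h1 : (1 - s) + s * Real.exp x ≤ (1 - s) + s * (1 + 2 * x) := by
    have := my_exp_le hx0 hx1
    nlinarith
  have h2 : (1 - s) + s * (1 + 2 * x) = 1 + c ^ 2 := by
    rw [hx]
    field_simp
    ring
  have h3 : 1 + c ^ 2 ≤ Real.exp (c ^ 2) := by
    have := Real.add_one_le_exp (c ^ 2)
    linarith
  linarith [h1, h2.le, h3]

lemma map_eval_pi {ι : Type*} [Fintype ι] {α : Type*} [MeasurableSpace α]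
    (μ : ι → Measure α) [∀ i, IsProbabilityMeasure (μ i)] (i : ι) :
    (Measure.pi μ).map (Function.eval i) = μ i := by
  classical
  ext s hs
  rw [Measure.map_apply (measurable_pi_apply i) hs]
  have hpre : Function.eval i ⁻¹' s
      = Set.pi Set.univ (Function.update (fun _ : ι => (Set.univ : Set α)) i s) := by
    ext f
    simp only [Set.mem_preimage, Set.mem_pi, Set.mem_univ, forall_true_left]
    constructor
    · intro h j
      by_cases hj : j = i
      · subst hj; simpa using h
      · simp [Function.update_of_ne hj]
    · intro h
      have := h i
      simpa using this
  rw [hpre, Measure.pi_pi]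
  rw [Finset.prod_eq_single i (fun j _ hj => by
    simp [Function.update_of_ne hj]) (fun h => absurd (Finset.mem_univ i) h)]
  simp

lemma core_tail {n : ℕ} {s : ℝ} (hs0 : 0 < s) (hs1 : s ≤ 1) (z : Fin n → ℝ)
    (hz2 : ∑ j, z j ^ 2 = 1) {μ : ℝ} (hμ : 0 < μ)
    (hμz : ∀ j, (μ / 2 * z j) ^ 2 ≤ 2 * s) :
    (Measure.pi fun _ : Fin n => sparseGaussianLaw s) {x | μ ≤ ∑ j, x j * z j}
      ≤ ENNReal.ofReal (Real.exp (-μ ^ 2 / 4)) := by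
  haveI := sparse_isProb hs0 hs1
  set t := μ / 2 with htdef
  have ht : 0 ≤ t := by positivity
  have hfun : (fun x : Fin n → ℝ => Real.exp (t * ∑ j, x j * z j))
      = fun x => ∏ j, Real.exp ((t * z j) * x j) := by
    funext x
    rw [← Real.exp_sum]
    congr 1
    rw [Finset.mul_sum]
    exact Finset.sum_congr rfl fun j _ => by ring
  have hint : Integrable (fun x : Fin n → ℝ => Real.exp (t * ∑ j, x j * z j))
      (Measure.pi fun _ : Fin n => sparseGaussianLaw s) := by
    rw [hfun]
    exact my_integrable_pi fun j => sparse_integrable hs0 _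
  have hchern := measure_ge_le_exp_mul_mgf (X := fun x : Fin n → ℝ => ∑ j, x j * z j)
    (μ := Measure.pi fun _ : Fin n => sparseGaussianLaw s) (t := t) μ ht hint
  have hmgf : mgf (fun x : Fin n → ℝ => ∑ j, x j * z j)
      (Measure.pi fun _ : Fin n => sparseGaussianLaw s) t
      = ∏ j, ((1 - s) + s * Real.exp ((t * z j) ^ 2 / (2 * s))) := by
    rw [mgf]
    calc (∫ x, Real.exp (t * ∑ j, x j * z j)
          ∂(Measure.pi fun _ : Fin n => sparseGaussianLaw s))
        = ∫ x : Fin n → ℝ, ∏ j, Real.exp ((t * z j) * x j)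
            ∂(Measure.pi fun _ : Fin n => sparseGaussianLaw s) := by rw [hfun]
      _ = ∏ j, ∫ u, Real.exp ((t * z j) * u) ∂(sparseGaussianLaw s) :=
          my_integral_pi (ν := sparseGaussianLaw s) (fun j u => Real.exp ((t * z j) * u))
      _ = ∏ j, ((1 - s) + s * Real.exp ((t * z j) ^ 2 / (2 * s))) :=
          Finset.prod_congr rfl fun j _ => sparse_integral hs0 hs1 _
  have hprod : ∏ j, ((1 - s) + s * Real.exp ((t * z j) ^ 2 / (2 * s)))
      ≤ Real.exp (t ^ 2) := by
    calc ∏ j, ((1 - s) + s * Real.exp ((t * z j) ^ 2 / (2 * s)))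
        ≤ ∏ j, Real.exp ((t * z j) ^ 2) := by
          refine Finset.prod_le_prod (fun j _ => ?_) (fun j _ => factor_le hs0 (hμz j))
          exact add_nonneg (by linarith) (mul_nonneg hs0.le (Real.exp_nonneg _))
      _ = Real.exp (∑ j, (t * z j) ^ 2) := (Real.exp_sum _ _).symm
      _ = Real.exp (t ^ 2) := by
          congr 1
          simp_rw [mul_pow]
          rw [← Finset.mul_sum, hz2, mul_one]
  have hkey : ((Measure.pi fun _ : Fin n => sparseGaussianLaw s)
      {x | μ ≤ ∑ j, x j * z j}).toReal ≤ Real.exp (-μ ^ 2 / 4) := by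
    refine hchern.trans ?_
    rw [hmgf]
    calc Real.exp (-t * μ) * ∏ j, ((1 - s) + s * Real.exp ((t * z j) ^ 2 / (2 * s)))
        ≤ Real.exp (-t * μ) * Real.exp (t ^ 2) :=
          mul_le_mul_of_nonneg_left hprod (Real.exp_nonneg _)
      _ = Real.exp (-t * μ + t ^ 2) := (Real.exp_add _ _).symm
      _ = Real.exp (-μ ^ 2 / 4) := by rw [htdef]; ring_nf
  rw [← ENNReal.ofReal_toReal (measure_ne_top _ _)]
  exact ENNReal.ofReal_le_ofReal hkey

end AuxSparse

end

/-- Tail bound for a sparse Gaussian linear form, and the resulting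
ℓ^∞ tail bound for a sparse Gaussian matrix. -/
theorem sparse_gaussian_tail_bound (n : ℕ) (s : ℝ) (hs0 : 0 < s) (hs1 : s ≤ 1)
    (lam₀ : ℝ) (hlam₀ : 0 < lam₀) (y : Fin n → ℝ) (hy2 : l2Norm y = 1)
    (hyinf : lInfNorm y ≤ lam₀) :
    (∀ (Ω : Type) [MeasurableSpace Ω] (P : Measure Ω) [IsProbabilityMeasure P],
      ∀ a : Ω → Fin n → ℝ, Measurable a →
        P.map a = (Measure.pi fun _ : Fin n => sparseGaussianLaw s) →
        ∀ μ : ℝ, 0 < μ → μ ≤ 2 * Real.sqrt (2 * s) / lam₀ →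
          P {ω | μ ≤ |∑ j, a ω j * y j|} ≤ ENNReal.ofReal (2 * Real.exp (-μ ^ 2 / 4))) ∧
    (∀ (m : ℕ) (Ω : Type) [MeasurableSpace Ω] (P : Measure Ω) [IsProbabilityMeasure P],
      ∀ A : Ω → Fin m → Fin n → ℝ, Measurable A →
        P.map A = sparseGaussianMatrixLaw m n s →
        ∀ μ : ℝ, 0 < μ → μ ≤ 2 * Real.sqrt (2 * s) / lam₀ →
          P {ω | μ ≤ lInfNorm (matVec (A ω) y)} ≤
            ENNReal.ofReal (2 * (m : ℝ) * Real.exp (-μ ^ 2 / 4))) := by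
  have hsum2 : ∑ j, y j ^ 2 = 1 := by
    have h0 : 0 ≤ ∑ j, y j ^ 2 := Finset.sum_nonneg fun j _ => sq_nonneg _
    have := hy2
    rw [l2Norm] at this
    nlinarith [Real.sq_sqrt h0, Real.sqrt_nonneg (∑ j, y j ^ 2)]
  have habs : ∀ j, |y j| ≤ lam₀ := by
    intro j
    refine le_trans ?_ hyinf
    rw [lInfNorm]
    exact le_ciSup (f := fun i : Fin n => |y i|) (Set.Finite.bddAbove (Set.finite_range _)) j
  have hcond : ∀ (μ : ℝ), 0 < μ → μ ≤ 2 * Real.sqrt (2 * s) / lam₀ →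
      ∀ (z : Fin n → ℝ), (∀ j, |z j| ≤ lam₀) → ∀ j, (μ / 2 * z j) ^ 2 ≤ 2 * s := by
    intro μ hμ hμle z hz j
    have h2s : (0:ℝ) ≤ 2 * s := by linarith
    have h1 : μ / 2 * lam₀ ≤ Real.sqrt (2 * s) := by
      rw [le_div_iff₀ hlam₀] at hμle
      nlinarith
    have h2 : |μ / 2 * z j| ≤ μ / 2 * lam₀ := by
      rw [abs_mul, abs_of_nonneg (by positivity : (0:ℝ) ≤ μ / 2)]
      exact mul_le_mul_of_nonneg_left (hz j) (by positivity)
    have h3 : (μ / 2 * z j) ^ 2 ≤ (μ / 2 * lam₀) ^ 2 := by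
      rw [← sq_abs]
      exact pow_le_pow_left₀ (abs_nonneg _) h2 2
    calc (μ / 2 * z j) ^ 2 ≤ (μ / 2 * lam₀) ^ 2 := h3
      _ ≤ Real.sqrt (2 * s) ^ 2 := pow_le_pow_left₀ (by positivity) h1 2
      _ = 2 * s := Real.sq_sqrt h2s
  have part1 : ∀ (Ω : Type) [MeasurableSpace Ω] (P : Measure Ω) [IsProbabilityMeasure P],
      ∀ a : Ω → Fin n → ℝ, Measurable a →
        P.map a = (Measure.pi fun _ : Fin n => sparseGaussianLaw s) →
        ∀ μ : ℝ, 0 < μ → μ ≤ 2 * Real.sqrt (2 * s) / lam₀ →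
          P {ω | μ ≤ |∑ j, a ω j * y j|} ≤ ENNReal.ofReal (2 * Real.exp (-μ ^ 2 / 4)) := by
    intro Ω _ P _ a ha hmap μ hμ hμle
    have hSm : MeasurableSet {x : Fin n → ℝ | μ ≤ |∑ j, x j * y j|} := by
      have hm : Measurable fun x : Fin n → ℝ => |∑ j, x j * y j| :=
        (Finset.measurable_sum _ fun j _ => (measurable_pi_apply j).mul_const _).abs
      exact measurableSet_le measurable_const hm
    have hPQ : P {ω | μ ≤ |∑ j, a ω j * y j|}
        = (Measure.pi fun _ : Fin n => sparseGaussianLaw s) {x | μ ≤ |∑ j, x j * y j|} := by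
      rw [← hmap, Measure.map_apply ha hSm]
      rfl
    rw [hPQ]
    have hsub : {x : Fin n → ℝ | μ ≤ |∑ j, x j * y j|}
        ⊆ {x | μ ≤ ∑ j, x j * y j} ∪ {x | μ ≤ ∑ j, x j * (-(y j))} := by
      intro x hx
      simp only [Set.mem_setOf_eq] at hx
      rcases le_abs.mp hx with h | h
      · exact Or.inl h
      · refine Or.inr ?_
        simpa [mul_neg, ← Finset.sum_neg_distrib] using h
    have hy' : ∀ j, |(-(y j))| ≤ lam₀ := fun j => by rw [abs_neg]; exact habs j
    have hsum2' : ∑ j, (-(y j)) ^ 2 = 1 := by simpa using hsum2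
    calc (Measure.pi fun _ : Fin n => sparseGaussianLaw s) {x | μ ≤ |∑ j, x j * y j|}
        ≤ (Measure.pi fun _ : Fin n => sparseGaussianLaw s)
            ({x | μ ≤ ∑ j, x j * y j} ∪ {x | μ ≤ ∑ j, x j * (-(y j))}) := measure_mono hsub
      _ ≤ (Measure.pi fun _ : Fin n => sparseGaussianLaw s) {x | μ ≤ ∑ j, x j * y j}
            + (Measure.pi fun _ : Fin n => sparseGaussianLaw s) {x | μ ≤ ∑ j, x j * (-(y j))} :=
          measure_union_le _ _
      _ ≤ ENNReal.ofReal (Real.exp (-μ ^ 2 / 4)) + ENNReal.ofReal (Real.exp (-μ ^ 2 / 4)) :=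
          add_le_add
            (core_tail hs0 hs1 y hsum2 hμ (hcond μ hμ hμle y habs))
            (core_tail hs0 hs1 _ hsum2' hμ (hcond μ hμ hμle _ hy'))
      _ = ENNReal.ofReal (2 * Real.exp (-μ ^ 2 / 4)) := by
          rw [← ENNReal.ofReal_add (Real.exp_nonneg _) (Real.exp_nonneg _)]
          congr 1
          ring
  refine ⟨part1, ?_⟩
  intro m Ω _ P _ A hA hmap μ hμ hμle
  rcases Nat.eq_zero_or_pos m with hm | hm
  · subst hm
    have hempty : {ω : Ω | μ ≤ lInfNorm (matVec (A ω) y)} = ∅ := by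
      ext ω
      simp only [Set.mem_setOf_eq, Set.mem_empty_iff_false, iff_false, not_le]
      have : lInfNorm (matVec (A ω) y) = 0 := by
        rw [lInfNorm]
        exact Real.iSup_of_isEmpty _
      rw [this]
      exact hμ
    rw [hempty]
    simp
  · haveI : Nonempty (Fin m) := ⟨⟨0, hm⟩⟩
    have key : ∀ i : Fin m, P {ω | μ ≤ |∑ j, A ω i j * y j|}
        ≤ ENNReal.ofReal (2 * Real.exp (-μ ^ 2 / 4)) := by
      intro i
      haveI := sparse_isProb hs0 hs1
      refine part1 Ω P (fun ω => A ω i) ((measurable_pi_apply i).comp hA) ?_ μ hμ hμle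
      have : (fun ω => A ω i) = Function.eval i ∘ A := rfl
      rw [this, ← Measure.map_map (measurable_pi_apply i) hA, hmap,
        sparseGaussianMatrixLaw, map_eval_pi]
    have hsub : {ω : Ω | μ ≤ lInfNorm (matVec (A ω) y)}
        ⊆ ⋃ i : Fin m, {ω | μ ≤ |∑ j, A ω i j * y j|} := by
      intro ω hω
      obtain ⟨i, hi⟩ := Finite.exists_max fun i : Fin m => |matVec (A ω) y i|
      have hle : lInfNorm (matVec (A ω) y) ≤ |matVec (A ω) y i| := by
        rw [lInfNorm]
        exact ciSup_le hi
      refine Set.mem_iUnion.mpr ⟨i, ?_⟩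
      have : μ ≤ |matVec (A ω) y i| := le_trans hω hle
      simpa [matVec] using this
    calc P {ω | μ ≤ lInfNorm (matVec (A ω) y)}
        ≤ P (⋃ i : Fin m, {ω | μ ≤ |∑ j, A ω i j * y j|}) := measure_mono hsub
      _ ≤ ∑' i : Fin m, P {ω | μ ≤ |∑ j, A ω i j * y j|} := measure_iUnion_le _
      _ ≤ ∑' _ : Fin m, ENNReal.ofReal (2 * Real.exp (-μ ^ 2 / 4)) :=
          ENNReal.tsum_le_tsum key
      _ = (m : ℝ≥0∞) * ENNReal.ofReal (2 * Real.exp (-μ ^ 2 / 4)) := by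
          rw [tsum_fintype]
          simp [Finset.sum_const, nsmul_eq_mul]
      _ = ENNReal.ofReal (2 * (m : ℝ) * Real.exp (-μ ^ 2 / 4)) := by
          rw [← ENNReal.ofReal_natCast m, ← ENNReal.ofReal_mul (Nat.cast_nonneg m)]
          congr 1
          ring
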